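/- Let G be a graph with m edges. Then the spectral radius μ(G) of its adjacency matrix satisfies μ(G) ≤ -1/2 + sqrt(2m + 1/4), with equality if and only if G is a complete graph together with some isolated vertices. -/

import Mathlib

open scoped Classical

open Matrix in
private lemma aux_psd {V : Type*} [Fintype V] (G : SimpleGraph V) (μ : ℝ)
    (hμ : IsGreatest {x : ℝ | ∃ f : V → ℝ, f ≠ 0 ∧ (G.adjMatrix ℝ).mulVec f = x • f} μ) :
    (μ • (1 : Matrix V V ℝ) - G.adjMatrix ℝ).PosSemidef := by
  classical
  set A := G.adjMatrix ℝ with hA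
  have hBh : (μ • (1 : Matrix V V ℝ) - A).IsHermitian := by
    unfold Matrix.IsHermitian
    ext i j
    simp [Matrix.conjTranspose_apply, Matrix.one_apply, A, SimpleGraph.adjMatrix_apply,
      G.adj_comm i j, eq_comm]
  apply hBh.posSemidef_iff_eigenvalues_nonneg.mpr
  intro i
  have h1 := hBh.mulVec_eigenvectorBasis i
  have he0 : (⇑(hBh.eigenvectorBasis i) : V → ℝ) ≠ 0 := fun h => hBh.eigenvectorBasis.orthonormal.ne_zero i (by ext v; simpa using congrFun h v)
  have hAe : A.mulVec (⇑(hBh.eigenvectorBasis i) : V → ℝ)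
      = (μ - hBh.eigenvalues i) • (⇑(hBh.eigenvectorBasis i) : V → ℝ) := by
    funext v
    have h2 := congrFun h1 v
    simp only [Matrix.sub_mulVec, Matrix.smul_mulVec, Matrix.one_mulVec, Pi.sub_apply,
      Pi.smul_apply, smul_eq_mul] at h2 ⊢
    linarith
  have hmem : (μ - hBh.eigenvalues i) ∈
      {x : ℝ | ∃ f : V → ℝ, f ≠ 0 ∧ (G.adjMatrix ℝ).mulVec f = x • f} := ⟨_, he0, hAe⟩
  have := hμ.2 hmem
  show (0:ℝ) ≤ hBh.eigenvalues i
  linarith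

open Matrix in
private lemma aux_rayleigh {V : Type*} [Fintype V] (G : SimpleGraph V) (μ : ℝ)
    (hpsd : (μ • (1 : Matrix V V ℝ) - G.adjMatrix ℝ).PosSemidef) (x : V → ℝ) :
    x ⬝ᵥ (G.adjMatrix ℝ) *ᵥ x ≤ μ * (x ⬝ᵥ x) := by
  have h := hpsd.dotProduct_mulVec_nonneg x
  simp only [star_trivial] at h
  rw [Matrix.sub_mulVec, Matrix.smul_mulVec, Matrix.one_mulVec, dotProduct_sub,
    dotProduct_smul] at h
  simp only [smul_eq_mul, RCLike.re_to_real] at h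
  linarith

open Matrix in
private lemma aux_absvec {V : Type*} [Fintype V] (G : SimpleGraph V) (μ : ℝ)
    (hpsd : (μ • (1 : Matrix V V ℝ) - G.adjMatrix ℝ).PosSemidef)
    (f : V → ℝ) (hf0 : f ≠ 0) (hf : (G.adjMatrix ℝ).mulVec f = μ • f) :
    ∃ g : V → ℝ, g ≠ 0 ∧ (∀ v, 0 ≤ g v) ∧ (G.adjMatrix ℝ).mulVec g = μ • g := by
  classical
  set A := G.adjMatrix ℝ with hA
  have hAnn : ∀ i j, 0 ≤ A i j := by
    intro i j; by_cases h : G.Adj i j <;> simp [hA, h]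
  set g : V → ℝ := fun v => |f v| with hg
  have hg0 : g ≠ 0 := by
    intro h
    apply hf0
    funext v
    have := congrFun h v
    simpa [hg, abs_eq_zero] using this
  have hgg : g ⬝ᵥ g = f ⬝ᵥ f := by
    simp [dotProduct, hg, ← sq, sq_abs]
  have hfAf : f ⬝ᵥ A *ᵥ f = μ * (f ⬝ᵥ f) := by
    rw [hf]
    simp [dotProduct, Finset.mul_sum, mul_comm, mul_left_comm]
  have hge : f ⬝ᵥ A *ᵥ f ≤ g ⬝ᵥ A *ᵥ g := by
    simp only [dotProduct, Matrix.mulVec, Finset.mul_sum]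
    refine Finset.sum_le_sum fun i _ => Finset.sum_le_sum fun j _ => ?_
    calc f i * (A i j * f j) = A i j * (f i * f j) := by ring
      _ ≤ A i j * |f i * f j| := mul_le_mul_of_nonneg_left (le_abs_self _) (hAnn i j)
      _ = g i * (A i j * g j) := by rw [abs_mul]; simp only [hg]; ring
  have h1 : g ⬝ᵥ (μ • (1 : Matrix V V ℝ) - A) *ᵥ g = 0 := by
    have h2 : g ⬝ᵥ (μ • (1 : Matrix V V ℝ) - A) *ᵥ g = μ * (g ⬝ᵥ g) - g ⬝ᵥ A *ᵥ g := by
      rw [Matrix.sub_mulVec, Matrix.smul_mulVec, Matrix.one_mulVec, dotProduct_sub,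
        dotProduct_smul, smul_eq_mul]
    have h3 := hpsd.dotProduct_mulVec_nonneg g
    simp only [star_trivial, RCLike.re_to_real] at h3
    have h4 : μ * (g ⬝ᵥ g) - g ⬝ᵥ A *ᵥ g ≤ 0 := by rw [hgg]; linarith
    linarith [h2 ▸ h4, h3]
  have h5 : (μ • (1 : Matrix V V ℝ) - A) *ᵥ g = 0 :=
    (hpsd.dotProduct_mulVec_zero_iff g).mp (by simpa using h1)
  refine ⟨g, hg0, fun v => abs_nonneg _, ?_⟩
  have h6 := congrArg (fun y => μ • g - y) h5
  simp only [sub_zero] at h6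
  rw [← h6, Matrix.sub_mulVec, Matrix.smul_mulVec, Matrix.one_mulVec]
  abel

open Matrix in
private

lemma aux_main {V : Type*} [Fintype V] (G : SimpleGraph V) (μ : ℝ) (g : V → ℝ)
    (hg0 : g ≠ 0) (hgnn : ∀ v, 0 ≤ g v) (_hμnn : 0 ≤ μ)
    (heig : (G.adjMatrix ℝ).mulVec g = μ • g) :
    μ^2 + μ ≤ 2 * G.edgeFinset.card ∧
    (μ^2 + μ = 2 * G.edgeFinset.card →
      ∃ K : Set V, ∀ u v : V, G.Adj u v ↔ u ≠ v ∧ u ∈ K ∧ v ∈ K) := by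
  classical
  set m : ℝ := (G.edgeFinset.card : ℝ) with hm
  have eig : ∀ v, μ * g v = ∑ j ∈ G.neighborFinset v, g j := by
    intro v
    have := congrFun heig v
    rw [SimpleGraph.adjMatrix_mulVec_apply] at this
    simpa [mul_comm] using this.symm
  have hVne : Nonempty V := by
    by_contra h
    exact hg0 (funext fun v => absurd ⟨v⟩ h)
  obtain ⟨w, -, hw⟩ := Finset.exists_max_image Finset.univ g
    ⟨Classical.arbitrary V, Finset.mem_univ _⟩
  have hw' : ∀ v, g v ≤ g w := fun v => hw v (Finset.mem_univ v)
  have hgw : 0 < g w := by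
    rcases (hgnn w).lt_or_eq with h | h
    · exact h
    · exact absurd (funext fun v => le_antisymm ((hw' v).trans h.ge) (hgnn v) : g = 0) hg0
  have hdeg_sum : ∑ v : V, (G.degree v : ℝ) = 2 * m := by
    rw [hm]; norm_cast
    simpa using (SimpleGraph.sum_degrees_eq_twice_card_edges G)
  have hdegnn : ∀ v, (0:ℝ) ≤ (G.degree v : ℝ) := fun v => Nat.cast_nonneg _
  have hsum_const : ∀ v : V, ∑ _j ∈ G.neighborFinset v, g w = (G.degree v : ℝ) * g w := by
    intro v
    rw [Finset.sum_const, SimpleGraph.card_neighborFinset_eq_degree, nsmul_eq_mul]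
  have step1 : μ ≤ (G.degree w : ℝ) := by
    have h1 : μ * g w ≤ (G.degree w : ℝ) * g w := by
      rw [eig w, ← hsum_const w]
      exact Finset.sum_le_sum fun j _ => hw' j
    exact le_of_mul_le_mul_right h1 hgw
  have step2 : μ^2 * g w ≤ (∑ j ∈ G.neighborFinset w, (G.degree j : ℝ)) * g w := by
    have h1 : μ^2 * g w = ∑ j ∈ G.neighborFinset w, ∑ k ∈ G.neighborFinset j, g k := by
      rw [pow_two, mul_assoc, eig w, Finset.mul_sum]
      exact Finset.sum_congr rfl fun j _ => eig j
    rw [h1, Finset.sum_mul]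
    refine Finset.sum_le_sum fun j _ => ?_
    rw [← hsum_const j]
    exact Finset.sum_le_sum fun k _ => hw' k
  have hwnot : w ∉ G.neighborFinset w := by simp
  have step3 : ∑ j ∈ G.neighborFinset w, (G.degree j : ℝ) + (G.degree w : ℝ)
      + ∑ j ∈ Finset.univ \ insert w (G.neighborFinset w), (G.degree j : ℝ) = 2 * m := by
    rw [← hdeg_sum,
      ← Finset.sum_sdiff (Finset.subset_univ (insert w (G.neighborFinset w))),
      Finset.sum_insert hwnot]
    ring
  have step3' : ∑ j ∈ G.neighborFinset w, (G.degree j : ℝ) ≤ 2 * m - (G.degree w : ℝ) := by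
    have : 0 ≤ ∑ j ∈ Finset.univ \ insert w (G.neighborFinset w), (G.degree j : ℝ) :=
      Finset.sum_nonneg fun j _ => hdegnn j
    linarith
  have hSle : μ^2 ≤ ∑ j ∈ G.neighborFinset w, (G.degree j : ℝ) :=
    le_of_mul_le_mul_right step2 hgw
  have key : μ^2 + μ ≤ 2 * m := by
    have := hSle.trans step3'
    linarith [step1]
  refine ⟨key, fun heq => ?_⟩
  -- equality analysis
  have E1 : (G.degree w : ℝ) = μ := by
    have := hSle.trans step3'
    linarith [step1]
  have hSeq : ∑ j ∈ G.neighborFinset w, (G.degree j : ℝ) = μ^2 := by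
    have h1 : ∑ j ∈ G.neighborFinset w, (G.degree j : ℝ) ≤ μ^2 := by
      rw [E1] at step3'; linarith
    linarith [hSle]
  have E2 : ∀ j, j ∉ insert w (G.neighborFinset w) → G.degree j = 0 := by
    intro j hj
    have hzero : ∑ j ∈ Finset.univ \ insert w (G.neighborFinset w), (G.degree j:ℝ) = 0 := by
      rw [hSeq, E1] at step3; linarith
    have := (Finset.sum_eq_zero_iff_of_nonneg (fun j _ => hdegnn j)).mp hzero j (by simp [hj])
    exact_mod_cast this
  have E4 : ∀ j ∈ G.neighborFinset w, g j = g w := by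
    have hsum : ∑ j ∈ G.neighborFinset w, (g w - g j) = 0 := by
      rw [Finset.sum_sub_distrib, hsum_const w, ← eig w, E1]
      ring
    intro j hj
    have := (Finset.sum_eq_zero_iff_of_nonneg
      (fun k _ => sub_nonneg.mpr (hw' k))).mp hsum j hj
    linarith
  have E3 : ∀ j ∈ G.neighborFinset w, ∑ k ∈ G.neighborFinset j, g k = (G.degree j : ℝ) * g w := by
    have hsum : ∑ j ∈ G.neighborFinset w,
        ((G.degree j : ℝ) * g w - ∑ k ∈ G.neighborFinset j, g k) = 0 := by
      rw [Finset.sum_sub_distrib, ← Finset.sum_mul, hSeq]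
      have h1 : μ^2 * g w = ∑ j ∈ G.neighborFinset w, ∑ k ∈ G.neighborFinset j, g k := by
        rw [pow_two, mul_assoc, eig w, Finset.mul_sum]
        exact Finset.sum_congr rfl fun j _ => eig j
      linarith
    intro j hj
    have := (Finset.sum_eq_zero_iff_of_nonneg (fun k hk => by
      rw [sub_nonneg, ← hsum_const k]
      exact Finset.sum_le_sum fun i _ => hw' i)).mp hsum j hj
    linarith
  have E5 : ∀ j ∈ G.neighborFinset w, (G.degree j : ℝ) = μ := by
    intro j hj
    have h1 : μ * g j = (G.degree j : ℝ) * g w := by rw [eig j, E3 j hj]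
    rw [E4 j hj] at h1
    exact (mul_right_cancel₀ hgw.ne' h1).symm
  -- structure
  set F : Finset V := insert w (G.neighborFinset w) with hF
  have hdegF : ∀ j ∈ F, G.degree j = G.degree w := by
    intro j hj
    rcases Finset.mem_insert.mp hj with rfl | hj
    · rfl
    · have := (E5 j hj).trans E1.symm
      exact_mod_cast this
  have hcardF : F.card = G.degree w + 1 := by
    rw [hF, Finset.card_insert_of_notMem hwnot, SimpleGraph.card_neighborFinset_eq_degree]
  have hNeq : ∀ j ∈ F, G.neighborFinset j = F \ {j} := by
    intro j hj
    have hsub : G.neighborFinset j ⊆ F \ {j} := by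
      intro k hk
      have hadj : G.Adj j k := (SimpleGraph.mem_neighborFinset _ _ _).mp hk
      have hkF : k ∈ F := by
        by_contra hkF
        have := E2 k hkF
        rw [← SimpleGraph.card_neighborFinset_eq_degree, Finset.card_eq_zero] at this
        have hjm : j ∈ G.neighborFinset k := (SimpleGraph.mem_neighborFinset _ _ _).mpr hadj.symm
        rw [this] at hjm
        exact absurd hjm (Finset.notMem_empty j)
      exact Finset.mem_sdiff.mpr ⟨hkF, by simp [hadj.ne']⟩
    refine Finset.eq_of_subset_of_card_le hsub ?_
    rw [Finset.card_sdiff_of_subset (by simpa using hj), hcardF,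
      SimpleGraph.card_neighborFinset_eq_degree, hdegF j hj]
    simp
  refine ⟨↑F, fun u v => ?_⟩
  constructor
  · intro h
    refine ⟨h.ne, ?_, ?_⟩
    · by_contra hu
      have hzero := E2 u (by simpa using hu)
      rw [← SimpleGraph.card_neighborFinset_eq_degree, Finset.card_eq_zero] at hzero
      have hvm : v ∈ G.neighborFinset u := (SimpleGraph.mem_neighborFinset _ _ _).mpr h
      rw [hzero] at hvm
      exact absurd hvm (Finset.notMem_empty v)
    · by_contra hv
      have hzero := E2 v (by simpa using hv)
      rw [← SimpleGraph.card_neighborFinset_eq_degree, Finset.card_eq_zero] at hzero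
      have hum : u ∈ G.neighborFinset v := (SimpleGraph.mem_neighborFinset _ _ _).mpr h.symm
      rw [hzero] at hum
      exact absurd hum (Finset.notMem_empty u)
  · rintro ⟨hne, hu, hv⟩
    have hu' : u ∈ F := by simpa using hu
    have hv' : v ∈ F := by simpa using hv
    have : v ∈ G.neighborFinset u := by
      rw [hNeq u hu']
      exact Finset.mem_sdiff.mpr ⟨hv', by simp [hne.symm]⟩
    exact (SimpleGraph.mem_neighborFinset _ _ _).mp this

/-- Stanley-type bound: μ(G) ≤ -1/2 + √(2m + 1/4), with equality iff G is a
complete graph together with some isolated vertices. -/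
theorem adj_spectral_radius_bound {V : Type*} [Fintype V] (G : SimpleGraph V) (μ : ℝ)
    (hμ : IsGreatest {x : ℝ | ∃ f : V → ℝ, f ≠ 0 ∧ (G.adjMatrix ℝ).mulVec f = x • f} μ) :
    μ ≤ -1/2 + Real.sqrt (2 * G.edgeFinset.card + 1/4) ∧
      (μ = -1/2 + Real.sqrt (2 * G.edgeFinset.card + 1/4) ↔
        ∃ K : Set V, ∀ u v : V, G.Adj u v ↔ u ≠ v ∧ u ∈ K ∧ v ∈ K) := by
  classical
  obtain ⟨⟨f, hf0, hf⟩, hub⟩ := hμ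
  have hpsd := aux_psd G μ ⟨⟨f, hf0, hf⟩, hub⟩
  have hray := aux_rayleigh G μ hpsd
  obtain ⟨g, hg0, hgnn, hgeig⟩ := aux_absvec G μ hpsd f hf0 hf
  set m : ℝ := (G.edgeFinset.card : ℝ) with hm
  have hμnn : 0 ≤ μ := by
    have h1 := hray g
    have h2 : 0 ≤ dotProduct g ((G.adjMatrix ℝ).mulVec g) := by
      simp only [dotProduct, Matrix.mulVec]
      refine Finset.sum_nonneg fun i _ => mul_nonneg (hgnn i) ?_
      refine Finset.sum_nonneg fun j _ => mul_nonneg ?_ (hgnn j)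
      by_cases h : G.Adj i j <;> simp [h]
    have h3 : 0 < dotProduct g g := by
      obtain ⟨v, hv⟩ := Function.ne_iff.mp hg0
      have hv' : 0 < g v * g v := mul_pos ((hgnn v).lt_of_ne (Ne.symm hv)) ((hgnn v).lt_of_ne (Ne.symm hv))
      calc (0:ℝ) < g v * g v := hv'
        _ ≤ dotProduct g g := by
            refine Finset.single_le_sum (f := fun u => g u * g u) ?_ (Finset.mem_univ v)
            intro u _; exact mul_nonneg (hgnn u) (hgnn u)
    nlinarith
  have hmain := aux_main G μ g hg0 hgnn hμnn hgeig
  have h14 : (0:ℝ) ≤ 2 * m + 1/4 := by rw [hm]; positivity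
  have hsnn := Real.sqrt_nonneg (2 * m + 1/4)
  have hsq := Real.sq_sqrt h14
  have hbound : μ ≤ -1/2 + Real.sqrt (2 * m + 1/4) := by
    have h1 : (μ + 1/2)^2 ≤ 2 * m + 1/4 := by nlinarith [hmain.1]
    nlinarith [h1, hsq, hsnn, hμnn]
  refine ⟨hbound, ?_, ?_⟩
  · intro he
    apply hmain.2
    have h2 : (μ + 1/2)^2 = 2 * m + 1/4 := by
      rw [show μ + 1/2 = Real.sqrt (2 * m + 1/4) by linarith]
      exact hsq
    nlinarith [h2]
  · rintro ⟨K, hK⟩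
    set F : Finset V := (Set.toFinite K).toFinset with hFdef
    have hmemF : ∀ v, v ∈ F ↔ v ∈ K := fun v => Set.Finite.mem_toFinset _
    have hN : ∀ v, G.neighborFinset v = if v ∈ F then F \ {v} else ∅ := by
      intro v
      ext u
      simp only [SimpleGraph.mem_neighborFinset, hK v u]
      by_cases hv : v ∈ F
      · have hvK := (hmemF v).mp hv
        rw [if_pos hv]
        simp only [Finset.mem_sdiff, Finset.mem_singleton, hmemF]
        constructor
        · rintro ⟨h1, _, h3⟩; exact ⟨h3, fun h => h1 h.symm⟩
        · rintro ⟨h1, h2⟩; exact ⟨fun h => h2 h.symm, hvK, h1⟩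
      · rw [if_neg hv]
        simp only [Finset.notMem_empty, iff_false]
        rintro ⟨_, h2, _⟩
        exact hv ((hmemF v).mpr h2)
    set k := F.card with hk
    have hdeg : ∀ v, G.degree v = if v ∈ F then k - 1 else 0 := by
      intro v
      rw [← SimpleGraph.card_neighborFinset_eq_degree, hN v]
      split_ifs with hv
      · rw [Finset.card_sdiff_of_subset (by simpa using hv)]; simp [hk]
      · simp
    have h2m : 2 * G.edgeFinset.card = k * (k - 1) := by
      rw [← SimpleGraph.sum_degrees_eq_twice_card_edges,
        Finset.sum_congr rfl (fun v _ => hdeg v)]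
      rw [Finset.sum_ite_mem, Finset.univ_inter, Finset.sum_const, smul_eq_mul]
    by_cases hk0 : k = 0
    · have hm0 : m = 0 := by
        have h0 : 2 * G.edgeFinset.card = 0 := by rw [h2m, hk0]
        have : G.edgeFinset.card = 0 := by omega
        rw [hm, this]; norm_num
      have hs : Real.sqrt (2 * m + 1/4) = 1/2 := by
        rw [hm0, show 2 * (0:ℝ) + 1/4 = (1/2)^2 by norm_num, Real.sqrt_sq (by norm_num)]
      rw [hs] at hbound ⊢
      linarith
    · have hk1 : 1 ≤ k := Nat.one_le_iff_ne_zero.mpr hk0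
      have hk1R : (1:ℝ) ≤ (k:ℝ) := by exact_mod_cast hk1
      set ind : V → ℝ := fun v => if v ∈ F then 1 else 0 with hind_def
      have hind : (G.adjMatrix ℝ).mulVec ind = ((k:ℝ) - 1) • ind := by
        funext v
        rw [SimpleGraph.adjMatrix_mulVec_apply, hN v]
        by_cases hv : v ∈ F
        · rw [if_pos hv]
          have hone : ∀ u ∈ F \ {v}, ind u = 1 := fun u hu =>
            if_pos (Finset.mem_sdiff.mp hu).1
          rw [Finset.sum_congr rfl hone, Finset.sum_const,
            Finset.card_sdiff_of_subset (by simpa using hv)]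
          simp only [Finset.card_singleton, nsmul_eq_mul, mul_one, Pi.smul_apply, hind_def,
            if_pos hv, smul_eq_mul, mul_one]
          push_cast [← hk, Nat.cast_sub hk1]
          ring
        · rw [if_neg hv]
          simp [hind_def, hv]
      have hne0 : ind ≠ 0 := by
        obtain ⟨v, hv⟩ := Finset.card_pos.mp hk1
        intro h
        have := congrFun h v
        simp [hind_def, hv] at this
      have hmem : ((k:ℝ) - 1) ≤ μ := hub ⟨ind, hne0, hind⟩
      have h2mR : 2 * m = (k:ℝ) * ((k:ℝ) - 1) := by
        have hc := congrArg (Nat.cast : ℕ → ℝ) h2m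
        push_cast [Nat.cast_sub hk1] at hc
        rw [hm]
        linarith [hc]
      have hs : Real.sqrt (2 * m + 1/4) = (k:ℝ) - 1/2 := by
        rw [show 2 * m + 1/4 = ((k:ℝ) - 1/2)^2 by rw [h2mR]; ring,
          Real.sqrt_sq (by linarith)]
      rw [hs] at hbound ⊢
      linarith
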